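/- arXiv:2512.11462 — 3 statements merged into one kernel-verified Lean document; each statement's English description precedes it below -/
import Mathlib

section
/- Let X, Y ∈ M_d(ℂ) and define φ_X(Y) := ∫₀¹ e^{-sX} Y e^{sX} ds. Then e^X · φ_X(Y) = ∑_{k,j ≥ 0} X^k Y X^j / (k+j+1)!. -/
open scoped Matrix Nat
open NormedSpace intervalIntegral MeasureTheory

attribute [local instance] Matrix.linftyOpNormedRing Matrix.linftyOpNormedAlgebra

private lemma prod_fact' (j k : ℕ) : (∏ i ∈ Finset.range (k+1), (j+1+i)) * j ! = (j+k+1)! := by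
  induction k with
  | zero => simp [Nat.factorial_succ]
  | succ k ih =>
      rw [Finset.prod_range_succ, mul_right_comm, ih,
        show j+(k+1)+1 = (j+k+1)+1 from by ring, Nat.factorial_succ (j+k+1),
        show j+1+(k+1) = j+k+1+1 from by ring, mul_comm]

private lemma beta_nat' (k j : ℕ) : ∫ x in (0:ℝ)..1, (1-x) ^ k * x ^ j =
    (k ! * j ! : ℝ) / (k + j + 1)! := by
  have h := Complex.betaIntegral_eval_nat_add_one_right (u := (j:ℂ)+1) (by simp; positivity) k
  rw [Complex.betaIntegral] at h
  have h2 : (∫ x in (0:ℝ)..1, ((x:ℂ)) ^ ((j:ℂ)+1-1) * ((1:ℂ)-(x:ℂ)) ^ ((k:ℂ)+1-1))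
      = (((∫ x in (0:ℝ)..1, (1-x)^k * x ^ j : ℝ)) : ℂ) := by
    rw [← intervalIntegral.integral_ofReal]
    apply intervalIntegral.integral_congr
    intro x hx
    simp only [add_sub_cancel_right, Complex.cpow_natCast]
    push_cast
    ring
  rw [h2] at h
  have h3 : (∏ i ∈ Finset.range (k+1), ((j:ℂ)+1+i)) = ((j+k+1)! : ℂ) / (j ! : ℂ) := by
    rw [eq_div_iff (by exact_mod_cast Nat.factorial_ne_zero j)]
    exact_mod_cast congrArg (Nat.cast : ℕ → ℂ) (prod_fact' j k)
  rw [h3] at h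
  have hj : (j ! : ℂ) ≠ 0 := by exact_mod_cast Nat.factorial_ne_zero j
  have hjk : ((j+k+1)! : ℂ) ≠ 0 := by exact_mod_cast Nat.factorial_ne_zero _
  have key : ((∫ x in (0:ℝ)..1, (1-x)^k * x ^ j : ℝ) : ℂ)
      = (((k ! * j ! : ℝ) / (k+j+1)! : ℝ) : ℂ) := by
    rw [h]
    push_cast
    rw [show k+j+1 = j+k+1 from by ring]
    field_simp
  exact_mod_cast key

private lemma rsmul' {d : ℕ} (r : ℝ) (A : Matrix (Fin d) (Fin d) ℂ) : r • A = (r:ℂ) • A := by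
  rw [show ((r:ℂ)) = algebraMap ℝ ℂ r from rfl, algebraMap_smul]

private lemma point' {d : ℕ} (X Y : Matrix (Fin d) (Fin d) ℂ) (s : ℝ) :
    exp X * (exp ((-s : ℝ) • X) * Y * exp ((s : ℝ) • X)) =
      ∑' p : ℕ × ℕ,
        ((((1-s)^p.1 * s^p.2 : ℝ) : ℂ) / ((p.1 ! * p.2 ! : ℕ) : ℂ)) •
          (X ^ p.1 * Y * X ^ p.2) := by
  have hc : Commute X ((-s : ℝ) • X) := (Commute.refl X).smul_right _
  have h1 : exp X * exp ((-s : ℝ) • X) = exp ((1-s : ℝ) • X) := by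
    rw [show exp X * exp ((-s:ℝ)•X) = exp (X + (-s:ℝ)•X) from (exp_add_of_commute hc).symm]
    congr 1
    rw [sub_smul, one_smul, neg_smul]
    abel
  rw [← mul_assoc, ← mul_assoc, h1, exp_eq_tsum ℂ]
  beta_reduce
  set a : ℕ → Matrix (Fin d) (Fin d) ℂ := fun k => (k ! : ℂ)⁻¹ • ((1-s : ℝ) • X) ^ k with ha
  set b : ℕ → Matrix (Fin d) (Fin d) ℂ := fun j => (j ! : ℂ)⁻¹ • ((s : ℝ) • X) ^ j with hb
  have hsa : Summable fun k => ‖a k‖ := norm_expSeries_summable' _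
  have hsb : Summable fun j => ‖b j‖ := norm_expSeries_summable' _
  erw [← (hsa.of_norm).tsum_mul_right Y]
  have hsa' : Summable fun k => ‖a k * Y‖ :=
    Summable.of_nonneg_of_le (fun n => norm_nonneg _) (fun n => norm_mul_le _ _)
      (hsa.mul_right ‖Y‖)
  erw [tsum_mul_tsum_of_summable_norm hsa' hsb]
  apply tsum_congr
  intro p
  simp only [ha, hb, smul_pow, rsmul', smul_smul, smul_mul_assoc, mul_smul_comm]
  congr 1
  push_cast
  field_simp

set_option maxHeartbeats 1000000 in
/-- For `X Y : M_d(ℂ)` and `φ_X(Y) := ∫₀¹ e^{-sX} Y e^{sX} ds`, one has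
`e^X * φ_X(Y) = ∑_{k,j≥0} X^k Y X^j / (k+j+1)!`. -/
theorem exp_mul_phi_eq_tsum {d : ℕ} (X Y : Matrix (Fin d) (Fin d) ℂ) :
    exp X * (∫ s in (0:ℝ)..1, exp ((-s : ℝ) • X) * Y * exp ((s : ℝ) • X)) =
      ∑' p : ℕ × ℕ, ((Nat.factorial (p.1 + p.2 + 1) : ℂ)⁻¹) • (X ^ p.1 * Y * X ^ p.2) := by
  rcases Nat.eq_zero_or_pos d with rfl | hd
  · haveI : Subsingleton (Matrix (Fin 0) (Fin 0) ℂ) := ⟨fun a b => by ext i; exact i.elim0⟩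
    exact Subsingleton.elim _ _
  haveI : Nonempty (Fin d) := ⟨⟨0, hd⟩⟩
  letI : ContinuousENorm (Matrix (Fin d) (Fin d) ℂ) := SeminormedAddGroup.toContinuousENorm
  set μ : Measure ℝ := volume.restrict (Set.Ioc (0:ℝ) 1) with hμ
  haveI hfin : IsFiniteMeasure μ := by
    constructor
    rw [hμ, Measure.restrict_apply_univ, Real.volume_Ioc]
    norm_num
  have hμuniv : (μ Set.univ).toReal = 1 := by
    rw [hμ, Measure.restrict_apply_univ, Real.volume_Ioc]
    norm_num
  set g : ℝ → Matrix (Fin d) (Fin d) ℂ :=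
    fun s => exp ((-s : ℝ) • X) * Y * exp ((s : ℝ) • X) with hg
  have hgc : Continuous g := by
    apply Continuous.mul
    apply Continuous.mul
    · exact exp_continuous.comp ((continuous_neg).smul continuous_const)
    · exact continuous_const
    · exact exp_continuous.comp ((continuous_id).smul continuous_const)
  have hgint : Integrable g μ := hgc.integrableOn_Ioc
  set F : ℕ × ℕ → ℝ → Matrix (Fin d) (Fin d) ℂ := fun p s =>
    ((((1-s)^p.1 * s^p.2 : ℝ) : ℂ) / ((p.1 ! * p.2 ! : ℕ) : ℂ)) •
      (X ^ p.1 * Y * X ^ p.2) with hF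
  have hnorm_pow : ∀ n : ℕ, ‖X ^ n‖ ≤ ‖X‖ ^ n := by
    intro n
    cases n with
    | zero => simp
    | succ n => exact norm_pow_le' X n.succ_pos
  have hMle : ∀ p : ℕ × ℕ, ‖X ^ p.1 * Y * X ^ p.2‖ ≤ ‖X‖ ^ p.1 * ‖Y‖ * ‖X‖ ^ p.2 := by
    intro p
    calc ‖X ^ p.1 * Y * X ^ p.2‖ ≤ ‖X ^ p.1 * Y‖ * ‖X ^ p.2‖ := norm_mul_le _ _
      _ ≤ ‖X ^ p.1‖ * ‖Y‖ * ‖X ^ p.2‖ := by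
          gcongr; exact norm_mul_le _ _
      _ ≤ ‖X‖ ^ p.1 * ‖Y‖ * ‖X‖ ^ p.2 := by
          gcongr <;> [exact hnorm_pow p.1; exact hnorm_pow p.2]
  have hcbound : ∀ p : ℕ × ℕ, ∀ s ∈ Set.Ioc (0:ℝ) 1,
      ‖F p s‖ ≤ (p.1 ! * p.2 ! : ℝ)⁻¹ * (‖X‖ ^ p.1 * ‖Y‖ * ‖X‖ ^ p.2) := by
    intro p s hs
    rw [hF]
    simp only [norm_smul]
    have h1 : ‖(((1-s)^p.1 * s^p.2 : ℝ) : ℂ) / ((p.1 ! * p.2 ! : ℕ) : ℂ)‖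
        ≤ (p.1 ! * p.2 ! : ℝ)⁻¹ := by
      have hs0 : (0:ℝ) ≤ s := le_of_lt hs.1
      have hs1 : s ≤ 1 := hs.2
      rw [norm_div, Complex.norm_real, Complex.norm_natCast,
        div_le_iff₀ (by positivity), Nat.cast_mul,
        inv_mul_cancel₀ (show ((p.1 ! : ℝ) * (p.2 ! : ℝ)) ≠ 0 by positivity)]
      rw [Real.norm_eq_abs, abs_mul, abs_pow, abs_pow,
        abs_of_nonneg (show (0:ℝ) ≤ 1 - s by linarith), abs_of_nonneg hs0]
      have h2 : (1-s)^p.1 ≤ 1 := pow_le_one₀ (by linarith) (by linarith)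
      have h3 : s^p.2 ≤ 1 := pow_le_one₀ hs0 hs1
      have h4 : (0:ℝ) ≤ (1-s)^p.1 := pow_nonneg (by linarith) _
      have h5 : (0:ℝ) ≤ s^p.2 := pow_nonneg hs0 _
      nlinarith
    calc _ ≤ (p.1 ! * p.2 ! : ℝ)⁻¹ * ‖X ^ p.1 * Y * X ^ p.2‖ :=
          mul_le_mul_of_nonneg_right h1 (norm_nonneg _)
      _ ≤ _ := mul_le_mul_of_nonneg_left (hMle p) (by positivity)
  have hFc : ∀ p, Continuous (F p) := by
    intro p
    rw [hF]
    exact ((Complex.continuous_ofReal.comp (by continuity)).div_const _).smul continuous_const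
  have hFint : ∀ p, Integrable (F p) μ := fun p => (hFc p).integrableOn_Ioc
  have hB : Summable (fun p : ℕ × ℕ =>
      (‖X‖ ^ p.1 / p.1 !) * (‖Y‖ * (‖X‖ ^ p.2 / p.2 !))) :=
    Summable.mul_of_nonneg (Real.summable_pow_div_factorial _)
      ((Real.summable_pow_div_factorial ‖X‖).mul_left ‖Y‖)
      (fun k => by positivity) (fun j => by positivity)
  have hFsum : Summable fun p : ℕ × ℕ => ∫ s, ‖F p s‖ ∂μ := by
    apply Summable.of_nonneg_of_le
      (fun p => integral_nonneg (fun s => norm_nonneg _)) (fun p => ?_) hB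
    have hb : ∀ᵐ s ∂μ, ‖‖F p s‖‖ ≤ (p.1 ! * p.2 ! : ℝ)⁻¹ * (‖X‖ ^ p.1 * ‖Y‖ * ‖X‖ ^ p.2) := by
      rw [hμ]
      apply ae_restrict_of_forall_mem measurableSet_Ioc
      intro s hs
      rw [Real.norm_of_nonneg (norm_nonneg _)]
      exact hcbound p s hs
    have hle := norm_integral_le_of_norm_le_const hb
    rw [Real.norm_of_nonneg (integral_nonneg (fun s => norm_nonneg _)), measureReal_def, hμuniv, mul_one] at hle
    refine hle.trans (le_of_eq ?_)
    rw [div_eq_mul_inv, div_eq_mul_inv, mul_inv]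
    ring
  -- main computation
  rw [intervalIntegral.integral_of_le zero_le_one, ← hμ]
  have hpull : exp X * (∫ s, g s ∂μ) = ∫ s, exp X * g s ∂μ := by
    have h := (ContinuousLinearMap.mul ℂ (Matrix (Fin d) (Fin d) ℂ) (exp X)).integral_comp_comm
      hgint
    simpa [ContinuousLinearMap.mul_apply'] using h.symm
  rw [hpull]
  have hpoint : (∫ s, exp X * g s ∂μ) = ∫ s, (∑' p : ℕ × ℕ, F p s) ∂μ := by
    apply MeasureTheory.integral_congr_ae
    filter_upwards with s
    rw [hg, hF]
    exact point' X Y s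
  erw [hpoint, ← integral_tsum_of_summable_integral_norm hFint hFsum]
  apply tsum_congr
  intro p
  rw [hF]
  beta_reduce
  rw [_root_.integral_smul_const]
  congr 1
  have hrw : (fun s : ℝ => (((1-s)^p.1 * s^p.2 : ℝ) : ℂ) / ((p.1 ! * p.2 ! : ℕ) : ℂ))
      = fun s : ℝ => (((1-s)^p.1 * s^p.2 : ℝ) : ℂ) * (((p.1 ! * p.2 ! : ℕ) : ℂ))⁻¹ := by
    funext s
    rw [div_eq_mul_inv]
  rw [hrw]
  rw [MeasureTheory.integral_mul_const]
  have hOf : (∫ a, (((1-a)^p.1 * a^p.2 : ℝ) : ℂ) ∂μ)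
      = (((∫ a, ((1-a)^p.1 * a^p.2) ∂μ : ℝ)) : ℂ) := by
    exact _root_.integral_ofReal
  rw [hOf, hμ, ← intervalIntegral.integral_of_le zero_le_one, beta_nat']
  have hk : ((p.1 ! : ℂ)) ≠ 0 := by exact_mod_cast Nat.factorial_ne_zero _
  have hj : ((p.2 ! : ℂ)) ≠ 0 := by exact_mod_cast Nat.factorial_ne_zero _
  have hkj : (((p.1 + p.2 + 1)! : ℂ)) ≠ 0 := by exact_mod_cast Nat.factorial_ne_zero _
  push_cast
  field_simp
end

section
/- Let X, Y, Z ∈ M_d(ℂ). Then, as ε → 0, exp(X + εY + ε²Z) = e^X · (I + ε φ_X(Y) + ε² (φ_X(Z) + ψ_X(Y))) + O(ε³), where φ_X(Y) = ∫₀¹ e^{-sX} Y e^{sX} ds and ψ_X(Y) = ∫₀¹∫₀ˢ e^{-sX} Y e^{(s-r)X} Y e^{rX} dr ds. -/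
open scoped Matrix
open NormedSpace intervalIntegral

attribute [local instance] Matrix.linftyOpNormedRing Matrix.linftyOpNormedAlgebra

section Aux

variable {d : ℕ}

local notation "𝕄" => Matrix (Fin d) (Fin d) ℂ

private lemma contE (A : 𝕄) : Continuous fun t : ℝ => exp (t • A) :=
  exp_continuous.comp (continuous_id.smul continuous_const)

private lemma contEneg (A : 𝕄) : Continuous fun t : ℝ => exp ((-t) • A) :=
  (contE A).comp continuous_neg

private lemma expR (A : 𝕄) : exp A = exp A := rfl

private lemma exp_smul_mul (A : 𝕄) (s t : ℝ) :
    exp (s • A) * exp (t • A) = exp ((s + t) • A) := by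
  rw [add_smul]; exact (exp_add_of_commute (((Commute.refl A).smul_left s).smul_right t)).symm

private lemma exp_smul_inv (A : 𝕄) (s : ℝ) : exp (s • A) * exp ((-s) • A) = 1 := by
  rw [exp_smul_mul, add_neg_cancel, zero_smul, exp_zero]

private lemma exp_smul_sub (A : 𝕄) (s r : ℝ) :
    exp (s • A) * exp ((-r) • A) = exp ((s - r) • A) := by
  rw [exp_smul_mul, sub_eq_add_neg]

private lemma hasDerivE (A : 𝕄) (t : ℝ) :
    HasDerivAt (fun u : ℝ => exp (u • A)) (exp (t • A) * A) t := by
  exact hasDerivAt_exp_smul_const (𝕂 := ℝ) A t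

private lemma hasDerivE' (A : 𝕄) (t : ℝ) :
    HasDerivAt (fun u : ℝ => exp (u • A)) (A * exp (t • A)) t := by
  exact hasDerivAt_exp_smul_const' (𝕂 := ℝ) A t

private lemma hasDerivEneg (A : 𝕄) (t : ℝ) :
    HasDerivAt (fun u : ℝ => exp ((-u) • A)) (-(exp ((-t) • A) * A)) t := by
  have h := (hasDerivE A (-t)).scomp t (hasDerivAt_neg t)
  simp only [Function.comp_def, neg_smul, one_smul] at h ⊢
  exact h

private lemma duhamel (A B : 𝕄) (s : ℝ) :
    exp (s • (A + B)) = exp (s • A) *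
      (1 + ∫ r in (0:ℝ)..s, exp ((-r) • A) * B * exp (r • (A + B))) := by
  have hderiv : ∀ r : ℝ,
      HasDerivAt (fun u : ℝ => exp ((-u) • A) * exp (u • (A + B)))
        (exp ((-r) • A) * B * exp (r • (A + B))) r := by
    intro r
    have h := (hasDerivEneg A r).mul (hasDerivE' (A + B) r)
    refine h.congr_deriv ?_
    noncomm_ring
  have hint : ∫ r in (0:ℝ)..s, exp ((-r) • A) * B * exp (r • (A + B)) =
      exp ((-s) • A) * exp (s • (A + B)) - exp ((-0:ℝ) • A) * exp ((0:ℝ) • (A + B)) := by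
    apply intervalIntegral.integral_eq_sub_of_hasDerivAt (fun r _ => hderiv r)
    exact (((contEneg A).mul continuous_const).mul (contE (A + B))).intervalIntegrable _ _
  rw [hint]
  simp only [neg_zero, zero_smul, exp_zero, one_mul, mul_one]
  rw [add_sub_cancel, ← mul_assoc, exp_smul_inv, one_mul]

private lemma norm_exp_le' (A : 𝕄) : ‖exp A‖ ≤ (‖(1:𝕄)‖ + 1) * Real.exp ‖A‖ := by
  rw [exp_eq_tsum ℂ]
  have hs : Summable fun n : ℕ => ‖((n.factorial : ℂ))⁻¹ • A ^ n‖ := norm_expSeries_summable' A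
  refine (norm_tsum_le_tsum_norm hs).trans ?_
  have hexp : Real.exp ‖A‖ = ∑' n : ℕ, ‖A‖ ^ n / n.factorial := by
    rw [Real.exp_eq_exp_ℝ, exp_eq_tsum_div]
  rw [hexp, ← tsum_mul_left]
  refine Summable.tsum_le_tsum (fun n => ?_) hs ?_
  · rcases Nat.eq_zero_or_pos n with h | h
    · subst h
      have h0 : ((Nat.factorial 0 : ℂ))⁻¹ • A ^ 0 = (1:𝕄) := by simp
      rw [h0]
      have : (‖(1:𝕄)‖ + 1) * (‖A‖ ^ 0 / (Nat.factorial 0 : ℝ)) = ‖(1:𝕄)‖ + 1 := by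
        simp only [pow_zero, Nat.factorial_zero, Nat.cast_one, div_one, mul_one]
      rw [this]
      linarith
    · have h1 : ‖((n.factorial : ℂ))⁻¹ • A ^ n‖ = ((n.factorial : ℝ))⁻¹ * ‖A ^ n‖ := by
        rw [norm_smul]
        simp
      rw [h1]
      have h2 : ‖A ^ n‖ ≤ ‖A‖ ^ n := norm_pow_le' A h
      have h3 : (0:ℝ) < n.factorial := by positivity
      calc ((n.factorial:ℝ))⁻¹ * ‖A ^ n‖ ≤ ((n.factorial:ℝ))⁻¹ * ‖A‖ ^ n := by
            gcongr
        _ = 1 * (((n.factorial:ℝ))⁻¹ * ‖A‖ ^ n) := (one_mul _).symm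
        _ ≤ (‖(1:𝕄)‖ + 1) * (((n.factorial:ℝ))⁻¹ * ‖A‖ ^ n) := by
            have h4 : (1:ℝ) ≤ ‖(1:𝕄)‖ + 1 := by linarith [norm_nonneg (1:𝕄)]
            have h5 : (0:ℝ) ≤ ((n.factorial:ℝ))⁻¹ * ‖A‖ ^ n := by positivity
            exact mul_le_mul_of_nonneg_right h4 h5
        _ = (‖(1:𝕄)‖ + 1) * (‖A‖ ^ n / n.factorial) := by ring
  · exact Summable.mul_left _ (by simpa using Real.summable_pow_div_factorial ‖A‖)

private lemma const_mul_intervalIntegral (c : 𝕄) {f : ℝ → 𝕄} {a s : ℝ}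
    (hf : @IntervalIntegrable 𝕄 _ NormedAddGroup.toENormedAddMonoid f MeasureTheory.volume a s) :
    c * ∫ r in a..s, f r = ∫ r in a..s, c * f r := by
  have h := (ContinuousLinearMap.mul ℂ 𝕄 c).intervalIntegral_comp_comm hf
  simpa using h.symm

private lemma norm_mul3_le (x y z : 𝕄) : ‖x * y * z‖ ≤ ‖x‖ * ‖y‖ * ‖z‖ :=
  (norm_mul_le _ _).trans (mul_le_mul_of_nonneg_right (norm_mul_le _ _) (norm_nonneg _))

private lemma mul_le_mul3 {a1 a2 a3 b1 b2 b3 : ℝ} (h1 : a1 ≤ b1) (h2 : a2 ≤ b2) (h3 : a3 ≤ b3)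
    (n1 : 0 ≤ a1) (n2 : 0 ≤ a2) (n3 : 0 ≤ a3) : a1 * a2 * a3 ≤ b1 * b2 * b3 := by
  have hb1 := n1.trans h1
  have hb2 := n2.trans h2
  exact mul_le_mul (mul_le_mul h1 h2 n2 hb1) h3 n3 (mul_nonneg hb1 hb2)

private lemma norm_mul3_le' {x y z : 𝕄} {b1 b2 b3 : ℝ} (h1 : ‖x‖ ≤ b1) (h2 : ‖y‖ ≤ b2)
    (h3 : ‖z‖ ≤ b3) : ‖x * y * z‖ ≤ b1 * b2 * b3 :=
  (norm_mul3_le x y z).trans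
    (mul_le_mul3 h1 h2 h3 (norm_nonneg _) (norm_nonneg _) (norm_nonneg _))

private lemma decomp3 {R : Type*} [Ring R] (e1 e2 e3 e' e a c : R) :
    (e1*(a+c)*e2)*(e3*(a+c)*e') - (e1*a*e2)*(e3*a*e)
      = (e1*c*e2)*(e3*(a+c)*e') + (e1*a*e2)*(e3*c*e') + (e1*a*e2)*(e3*a*(e'-e)) := by
  noncomm_ring

private lemma split3 {R : Type*} [Ring R] (e1 b e2 k : R) :
    e1*b*(e2*(1+k)) = e1*b*e2 + (e1*b*e2)*k := by noncomm_ring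

private lemma assoc5 {R : Type*} [Ring R] (e1 u e2 e3 v w : R) :
    (e1*u*e2)*(e3*v*w) = e1*u*(e2*e3)*v*w := by noncomm_ring

private lemma smul_pull2 {R : Type*} [Ring R] [Module ℂ R] [SMulCommClass ℂ R R]
    [IsScalarTower ℂ R R] (c : ℂ) (x1 x2 x3 x4 x5 x6 : R) :
    c^2 • ((x1*x2*x3)*(x4*x5*x6)) = (x1*(c•x2)*x3)*(x4*(c•x5)*x6) := by
  simp only [smul_mul_assoc, mul_smul_comm, smul_smul, pow_two]

end Aux

set_option maxHeartbeats 2000000 in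
/-- For `X Y Z : M_d(ℂ)`, as `ε → 0`,
`exp(X + εY + ε²Z) = e^X (I + ε φ_X(Y) + ε² (φ_X(Z) + ψ_X(Y))) + O(ε³)`. -/
theorem exp_perturbation_expansion {d : ℕ} (X Y Z : Matrix (Fin d) (Fin d) ℂ) :
    ∃ C > 0, ∃ δ > 0, ∀ ε : ℝ, 0 < ε → ε < δ →
      ‖exp (X + (ε : ℂ) • Y + ((ε : ℂ) ^ 2) • Z) -
          exp X *
            (1 + (ε : ℂ) • (∫ s in (0:ℝ)..1, exp ((-s : ℝ) • X) * Y * exp ((s : ℝ) • X)) +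
              ((ε : ℂ) ^ 2) •
                ((∫ s in (0:ℝ)..1, exp ((-s : ℝ) • X) * Z * exp ((s : ℝ) • X)) +
                  (∫ s in (0:ℝ)..1, ∫ r in (0:ℝ)..s,
                    exp ((-s : ℝ) • X) * Y * exp (((s - r : ℝ)) • X) * Y *
                      exp ((r : ℝ) • X))))‖ ≤ C * ε ^ 3 := by
  classical
  -- uniform bound for exponentials
  obtain ⟨M, hM1, hMexp⟩ : ∃ M : ℝ, 1 ≤ M ∧
      ∀ A : Matrix (Fin d) (Fin d) ℂ, ‖A‖ ≤ ‖X‖ + ‖Y‖ + ‖Z‖ + 1 → ‖exp A‖ ≤ M := by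
    refine ⟨(‖(1 : Matrix (Fin d) (Fin d) ℂ)‖ + 1) * Real.exp (‖X‖ + ‖Y‖ + ‖Z‖ + 1), ?_, ?_⟩
    · have h1 : (1:ℝ) ≤ ‖(1 : Matrix (Fin d) (Fin d) ℂ)‖ + 1 := by
        linarith [norm_nonneg (1 : Matrix (Fin d) (Fin d) ℂ)]
      have h2 : (1:ℝ) ≤ Real.exp (‖X‖ + ‖Y‖ + ‖Z‖ + 1) := Real.one_le_exp (by positivity)
      nlinarith
    · intro A hA
      refine (norm_exp_le' A).trans ?_
      have h2 := Real.exp_le_exp.mpr hA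
      have h3 : (0:ℝ) ≤ ‖(1 : Matrix (Fin d) (Fin d) ℂ)‖ + 1 := by
        linarith [norm_nonneg (1 : Matrix (Fin d) (Fin d) ℂ)]
      exact mul_le_mul_of_nonneg_left h2 h3
  have hMpos : (0:ℝ) < M := lt_of_lt_of_le one_pos hM1
  set Q : ℝ := ‖Y‖ + ‖Z‖ + 1 with hQdef
  have hQ1 : (1:ℝ) ≤ Q := by
    rw [hQdef]; linarith [norm_nonneg Y, norm_nonneg Z]
  have hQpos : (0:ℝ) < Q := lt_of_lt_of_le one_pos hQ1
  refine ⟨M * (3 * M ^ 6 * Q ^ 3) + 1, ?_, 1, one_pos, ?_⟩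
  · have h6 : (0:ℝ) < M ^ 6 := pow_pos hMpos 6
    have h3 : (0:ℝ) < Q ^ 3 := pow_pos hQpos 3
    have := mul_pos hMpos (mul_pos (mul_pos (by norm_num : (0:ℝ) < 3) h6) h3)
    linarith
  intro ε hε hε1
  have hε1' : ε ≤ 1 := le_of_lt hε1
  have hεc : ‖((ε : ℝ) : ℂ)‖ = ε := by
    rw [Complex.norm_real, Real.norm_eq_abs, abs_of_pos hε]
  set b : Matrix (Fin d) (Fin d) ℂ := (ε:ℂ) • Y + ((ε:ℂ)^2) • Z with hbdef
  have hXb : X + (ε:ℂ) • Y + ((ε:ℂ)^2) • Z = X + b := by rw [hbdef, add_assoc]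
  have hbnorm : ‖b‖ ≤ ε * Q := by
    calc ‖b‖ ≤ ‖(ε:ℂ) • Y‖ + ‖((ε:ℂ)^2) • Z‖ := norm_add_le _ _
      _ = ε * ‖Y‖ + ε^2 * ‖Z‖ := by
          rw [norm_smul, norm_smul, norm_pow, hεc]
      _ ≤ ε * Q := by
          rw [hQdef]
          nlinarith [mul_nonneg (mul_nonneg hε.le (sub_nonneg.mpr hε1')) (norm_nonneg Z),
            norm_nonneg Y, norm_nonneg Z]
  have hbQ : ‖b‖ ≤ Q := hbnorm.trans (by nlinarith)
  have hXbnorm : ‖X + b‖ ≤ ‖X‖ + ‖Y‖ + ‖Z‖ + 1 := by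
    have := norm_add_le X b
    rw [hQdef] at hbQ
    linarith
  -- exponential bounds
  have hEX : ∀ t : ℝ, |t| ≤ 1 → ‖exp (t • X)‖ ≤ M := by
    intro t ht
    refine hMexp _ ?_
    rw [norm_smul, Real.norm_eq_abs]
    have h0 := norm_nonneg X
    have h1 := abs_nonneg t
    nlinarith [norm_nonneg Y, norm_nonneg Z]
  have hEXb : ∀ t : ℝ, |t| ≤ 1 → ‖exp (t • (X + b))‖ ≤ M := by
    intro t ht
    refine hMexp _ ?_
    rw [norm_smul, Real.norm_eq_abs]
    have h0 := norm_nonneg (X + b)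
    nlinarith
  -- Duhamel difference bound
  have hEdiff : ∀ r : ℝ, 0 ≤ r → r ≤ 1 →
      ‖exp (r • (X + b)) - exp (r • X)‖ ≤ M^3 * Q * ε := by
    intro r hr0 hr1
    have heq : exp (r • (X + b)) - exp (r • X) =
        exp (r • X) * ∫ u in (0:ℝ)..r, exp ((-u) • X) * b * exp (u • (X + b)) := by
      rw [duhamel X b r, mul_add, mul_one, add_sub_cancel_left]
    rw [heq]
    have hintb : ‖∫ u in (0:ℝ)..r, exp ((-u) • X) * b * exp (u • (X + b))‖ ≤
        (M * (ε * Q) * M) * |r - 0| := by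
      apply intervalIntegral.norm_integral_le_of_norm_le_const
      intro u hu
      rw [Set.uIoc_of_le hr0] at hu
      have hu0 : 0 < u := hu.1
      have hu1 : u ≤ 1 := hu.2.trans hr1
      refine norm_mul3_le' (hEX (-u) (by rw [abs_neg, abs_of_pos hu0]; exact hu1)) hbnorm
        (hEXb u (by rw [abs_of_pos hu0]; exact hu1))
    calc ‖exp (r • X) * ∫ u in (0:ℝ)..r, exp ((-u) • X) * b * exp (u • (X + b))‖
        ≤ ‖exp (r • X)‖ * ‖∫ u in (0:ℝ)..r, exp ((-u) • X) * b * exp (u • (X + b))‖ :=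
          norm_mul_le _ _
      _ ≤ M * ((M * (ε * Q) * M) * |r - 0|) := by
          apply mul_le_mul (hEX r (by rw [abs_of_nonneg hr0]; exact hr1)) hintb
            (norm_nonneg _) (by linarith)
      _ ≤ M^3 * Q * ε := by
          rw [sub_zero, abs_of_nonneg hr0]
          have h1 : M * ((M * (ε * Q) * M) * r) = M^3 * Q * ε * r := by ring
          rw [h1]
          nlinarith [pow_pos hMpos 3, mul_pos (mul_pos (pow_pos hMpos 3) hQpos) hε]
  -- continuity facts
  have hcontf : Continuous fun r : ℝ => exp ((-r) • X) * b * exp (r • (X + b)) :=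
    ((contEneg X).mul continuous_const).mul (contE (X + b))
  have hcontgY : Continuous fun r : ℝ => exp ((-r) • X) * Y * exp (r • X) :=
    ((contEneg X).mul continuous_const).mul (contE X)
  have hcontgZ : Continuous fun r : ℝ => exp ((-r) • X) * Z * exp (r • X) :=
    ((contEneg X).mul continuous_const).mul (contE X)
  have hcontc1 : Continuous fun s : ℝ => exp ((-s) • X) * b * exp (s • X) :=
    ((contEneg X).mul continuous_const).mul (contE X)
  have hK0cont : Continuous fun s : ℝ =>
      ∫ r in (0:ℝ)..s, exp ((-r) • X) * b * exp (r • (X + b)) :=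
    intervalIntegral.continuous_primitive (fun a c => hcontf.intervalIntegrable a c) 0
  have hKYcont : Continuous fun s : ℝ =>
      ∫ r in (0:ℝ)..s, exp ((-r) • X) * Y * exp (r • X) :=
    intervalIntegral.continuous_primitive (fun a c => hcontgY.intervalIntegrable a c) 0
  -- combination lemma
  have hcombine : ∀ (U V W : Matrix (Fin d) (Fin d) ℂ) (s r : ℝ),
      (exp ((-s) • X) * U * exp (s • X)) * (exp ((-r) • X) * V * W)
        = exp ((-s) • X) * U * exp ((s - r) • X) * V * W := by
    intro U V W s r
    rw [← exp_smul_sub X s r, assoc5]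
  -- first order part
  have hφint : (∫ s in (0:ℝ)..1, exp ((-s) • X) * b * exp (s • X))
      = (ε:ℂ) • (∫ s in (0:ℝ)..1, exp ((-s) • X) * Y * exp (s • X))
        + ((ε:ℂ)^2) • (∫ s in (0:ℝ)..1, exp ((-s) • X) * Z * exp (s • X)) := by
    have h1 : ∀ s : ℝ, exp ((-s) • X) * b * exp (s • X)
        = (ε:ℂ) • (exp ((-s) • X) * Y * exp (s • X))
          + ((ε:ℂ)^2) • (exp ((-s) • X) * Z * exp (s • X)) := by
      intro s
      rw [hbdef]
      simp only [mul_add, add_mul, smul_mul_assoc, mul_smul_comm]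
    rw [intervalIntegral.integral_congr (g := fun s =>
      (ε:ℂ) • (exp ((-s) • X) * Y * exp (s • X))
        + ((ε:ℂ)^2) • (exp ((-s) • X) * Z * exp (s • X))) (fun s _ => h1 s)]
    rw [intervalIntegral.integral_add ((hcontgY.fun_const_smul _).intervalIntegrable 0 1)
      ((hcontgZ.fun_const_smul _).intervalIntegrable 0 1),
      intervalIntegral.integral_smul, intervalIntegral.integral_smul]
  -- split of the Duhamel integrand
  have hsplit : ∀ s : ℝ, exp ((-s) • X) * b * exp (s • (X + b)) =
      exp ((-s) • X) * b * exp (s • X)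
        + (exp ((-s) • X) * b * exp (s • X)) *
          (∫ r in (0:ℝ)..s, exp ((-r) • X) * b * exp (r • (X + b))) := by
    intro s
    calc exp ((-s) • X) * b * exp (s • (X + b))
        = exp ((-s) • X) * b * (exp (s • X) *
            (1 + ∫ r in (0:ℝ)..s, exp ((-r) • X) * b * exp (r • (X + b)))) := by
          rw [← duhamel]
      _ = _ := split3 _ _ _ _
  -- key expansion
  have hkey : exp (X + b) = exp X *
      (1 + (∫ s in (0:ℝ)..1, exp ((-s) • X) * b * exp (s • X))
        + ∫ s in (0:ℝ)..1, (exp ((-s) • X) * b * exp (s • X)) *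
            (∫ r in (0:ℝ)..s, exp ((-r) • X) * b * exp (r • (X + b)))) := by
    have h1 := duhamel X b 1
    simp only [one_smul] at h1
    rw [h1]
    congr 1
    rw [intervalIntegral.integral_congr (g := fun s =>
      exp ((-s) • X) * b * exp (s • X)
        + (exp ((-s) • X) * b * exp (s • X)) *
          (∫ r in (0:ℝ)..s, exp ((-r) • X) * b * exp (r • (X + b))))
      (fun s _ => hsplit s)]
    rw [intervalIntegral.integral_add (hcontc1.intervalIntegrable 0 1)
      ((hcontc1.fun_mul hK0cont).intervalIntegrable 0 1)]
    abel
  -- inner rewrite for ψ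
  have hψinner : ∀ s : ℝ,
      (∫ r in (0:ℝ)..s, exp ((-s) • X) * Y * exp ((s - r) • X) * Y * exp (r • X))
        = (exp ((-s) • X) * Y * exp (s • X)) *
          ∫ r in (0:ℝ)..s, exp ((-r) • X) * Y * exp (r • X) := by
    intro s
    rw [const_mul_intervalIntegral _ (hcontgY.intervalIntegrable 0 s)]
    apply intervalIntegral.integral_congr
    intro r _
    exact (hcombine Y Y _ s r).symm
  -- pointwise third order bound
  have hpt : ∀ s : ℝ, 0 < s → s ≤ 1 → ∀ r : ℝ, 0 < r → r ≤ s →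
      ‖(exp ((-s) • X) * b * exp (s • X)) *
          (exp ((-r) • X) * b * exp (r • (X + b)))
        - (ε:ℂ)^2 • ((exp ((-s) • X) * Y * exp (s • X)) *
          (exp ((-r) • X) * Y * exp (r • X)))‖ ≤ 3 * M^6 * Q^3 * ε^3 := by
    intro s hs0 hs1 r hr0 hrs
    have hr1 : r ≤ 1 := hrs.trans hs1
    have hE1 : ‖exp ((-s) • X)‖ ≤ M := hEX (-s) (by rw [abs_neg, abs_of_pos hs0]; exact hs1)
    have hE2 : ‖exp (s • X)‖ ≤ M := hEX s (by rw [abs_of_pos hs0]; exact hs1)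
    have hE3 : ‖exp ((-r) • X)‖ ≤ M := hEX (-r) (by rw [abs_neg, abs_of_pos hr0]; exact hr1)
    have hE' : ‖exp (r • (X + b))‖ ≤ M := hEXb r (by rw [abs_of_pos hr0]; exact hr1)
    have hEE : ‖exp (r • (X + b)) - exp (r • X)‖ ≤ M^3 * Q * ε := hEdiff r hr0.le hr1
    have hna : ‖(ε:ℂ) • Y‖ ≤ ε * Q := by
      rw [norm_smul, hεc, hQdef]
      nlinarith [norm_nonneg Y, norm_nonneg Z]
    have hnc : ‖((ε:ℂ)^2) • Z‖ ≤ ε^2 * Q := by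
      rw [norm_smul, norm_pow, hεc, hQdef]
      nlinarith [norm_nonneg Y, norm_nonneg Z, sq_nonneg ε]
    have hsm : (ε:ℂ)^2 • ((exp ((-s) • X) * Y * exp (s • X)) *
        (exp ((-r) • X) * Y * exp (r • X)))
        = (exp ((-s) • X) * ((ε:ℂ) • Y) * exp (s • X)) *
          (exp ((-r) • X) * ((ε:ℂ) • Y) * exp (r • X)) := by
      exact smul_pull2 _ _ _ _ _ _ _
    rw [hsm]
    have hdecomp : (exp ((-s) • X) * b * exp (s • X)) *
          (exp ((-r) • X) * b * exp (r • (X + b)))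
        - (exp ((-s) • X) * ((ε:ℂ) • Y) * exp (s • X)) *
          (exp ((-r) • X) * ((ε:ℂ) • Y) * exp (r • X))
        = (exp ((-s) • X) * (((ε:ℂ)^2) • Z) * exp (s • X)) *
            (exp ((-r) • X) * b * exp (r • (X + b)))
          + (exp ((-s) • X) * ((ε:ℂ) • Y) * exp (s • X)) *
            (exp ((-r) • X) * (((ε:ℂ)^2) • Z) * exp (r • (X + b)))
          + (exp ((-s) • X) * ((ε:ℂ) • Y) * exp (s • X)) *
            (exp ((-r) • X) * ((ε:ℂ) • Y) *
              (exp (r • (X + b)) - exp (r • X))) := by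
      rw [hbdef]
      exact decomp3 _ _ _ _ _ _ _
    rw [hdecomp]
    have hT1 : ‖(exp ((-s) • X) * (((ε:ℂ)^2) • Z) * exp (s • X)) *
        (exp ((-r) • X) * b * exp (r • (X + b)))‖
        ≤ (M * (ε^2 * Q) * M) * (M * (ε * Q) * M) :=
      (norm_mul_le _ _).trans (mul_le_mul (norm_mul3_le' hE1 hnc hE2)
        (norm_mul3_le' hE3 hbnorm hE') (norm_nonneg _)
        (by positivity))
    have hT2 : ‖(exp ((-s) • X) * ((ε:ℂ) • Y) * exp (s • X)) *
        (exp ((-r) • X) * (((ε:ℂ)^2) • Z) * exp (r • (X + b)))‖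
        ≤ (M * (ε * Q) * M) * (M * (ε^2 * Q) * M) :=
      (norm_mul_le _ _).trans (mul_le_mul (norm_mul3_le' hE1 hna hE2)
        (norm_mul3_le' hE3 hnc hE') (norm_nonneg _)
        (by positivity))
    have hT3 : ‖(exp ((-s) • X) * ((ε:ℂ) • Y) * exp (s • X)) *
        (exp ((-r) • X) * ((ε:ℂ) • Y) * (exp (r • (X + b)) - exp (r • X)))‖
        ≤ (M * (ε * Q) * M) * (M * (ε * Q) * (M^3 * Q * ε)) :=
      (norm_mul_le _ _).trans (mul_le_mul (norm_mul3_le' hE1 hna hE2)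
        (norm_mul3_le' hE3 hna hEE) (norm_nonneg _)
        (by positivity))
    have hM46 : M^4 ≤ M^6 := pow_le_pow_right₀ hM1 (by norm_num)
    have hQ23 : Q^2 ≤ Q^3 := pow_le_pow_right₀ hQ1 (by norm_num)
    have harith1 : (M * (ε^2 * Q) * M) * (M * (ε * Q) * M) ≤ M^6 * Q^3 * ε^3 := by
      have h1 : (M * (ε^2 * Q) * M) * (M * (ε * Q) * M) = (M^4 * Q^2) * ε^3 := by ring
      have h2 : M^4 * Q^2 ≤ M^6 * Q^3 :=
        mul_le_mul hM46 hQ23 (by positivity) (by positivity)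
      rw [h1]
      calc (M^4 * Q^2) * ε^3 ≤ (M^6 * Q^3) * ε^3 :=
            mul_le_mul_of_nonneg_right h2 (by positivity)
        _ = M^6 * Q^3 * ε^3 := by ring
    have harith2 : (M * (ε * Q) * M) * (M * (ε^2 * Q) * M) ≤ M^6 * Q^3 * ε^3 := by
      have h1 : (M * (ε * Q) * M) * (M * (ε^2 * Q) * M) = (M^4 * Q^2) * ε^3 := by ring
      have h2 : M^4 * Q^2 ≤ M^6 * Q^3 :=
        mul_le_mul hM46 hQ23 (by positivity) (by positivity)
      rw [h1]
      calc (M^4 * Q^2) * ε^3 ≤ (M^6 * Q^3) * ε^3 :=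
            mul_le_mul_of_nonneg_right h2 (by positivity)
        _ = M^6 * Q^3 * ε^3 := by ring
    have harith3 : (M * (ε * Q) * M) * (M * (ε * Q) * (M^3 * Q * ε)) = M^6 * Q^3 * ε^3 := by
      ring
    calc ‖_ + _ + _‖ ≤ ‖_ + _‖ + ‖_‖ := norm_add_le _ _
      _ ≤ ‖_‖ + ‖_‖ + ‖_‖ := by gcongr; exact norm_add_le _ _
      _ ≤ M^6 * Q^3 * ε^3 + M^6 * Q^3 * ε^3 + M^6 * Q^3 * ε^3 := by
          gcongr
          · exact hT1.trans harith1
          · exact hT2.trans harith2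
          · exact hT3.trans_eq harith3
      _ = 3 * M^6 * Q^3 * ε^3 := by ring
  -- outer pointwise bound
  have houter : ∀ s ∈ Set.uIoc (0:ℝ) 1,
      ‖(exp ((-s) • X) * b * exp (s • X)) *
          (∫ r in (0:ℝ)..s, exp ((-r) • X) * b * exp (r • (X + b)))
        - (ε:ℂ)^2 • ((exp ((-s) • X) * Y * exp (s • X)) *
          (∫ r in (0:ℝ)..s, exp ((-r) • X) * Y * exp (r • X)))‖
        ≤ 3 * M^6 * Q^3 * ε^3 := by
    intro s hs
    rw [Set.uIoc_of_le (zero_le_one)] at hs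
    obtain ⟨hs0, hs1⟩ := hs
    rw [const_mul_intervalIntegral _ (hcontf.intervalIntegrable 0 s),
      const_mul_intervalIntegral _ (hcontgY.intervalIntegrable 0 s),
      ← intervalIntegral.integral_smul,
      ← intervalIntegral.integral_sub
        ((continuous_const.fun_mul hcontf).intervalIntegrable 0 s)
        (((continuous_const.fun_mul hcontgY).fun_const_smul _).intervalIntegrable 0 s)]
    have hbound := intervalIntegral.norm_integral_le_of_norm_le_const
      (C := 3 * M^6 * Q^3 * ε^3) (a := (0:ℝ)) (b := s)
      (f := fun r => (exp ((-s) • X) * b * exp (s • X)) *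
          (exp ((-r) • X) * b * exp (r • (X + b)))
        - (ε:ℂ)^2 • ((exp ((-s) • X) * Y * exp (s • X)) *
          (exp ((-r) • X) * Y * exp (r • X)))) ?_
    · refine hbound.trans ?_
      rw [sub_zero, abs_of_pos hs0]
      have hC : 0 ≤ 3 * M^6 * Q^3 * ε^3 := by positivity
      nlinarith
    · intro r hr
      rw [Set.uIoc_of_le hs0.le] at hr
      exact hpt s hs0 hs1 r hr.1 hr.2
  -- assemble
  rw [hXb, hkey, hφint]
  have hψeq : (∫ s in (0:ℝ)..1, ∫ r in (0:ℝ)..s,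
        exp ((-s) • X) * Y * exp ((s - r) • X) * Y * exp (r • X))
      = ∫ s in (0:ℝ)..1, (exp ((-s) • X) * Y * exp (s • X)) *
          ∫ r in (0:ℝ)..s, exp ((-r) • X) * Y * exp (r • X) :=
    intervalIntegral.integral_congr (fun s _ => hψinner s)
  rw [hψeq]
  have hfactor : exp X *
        (1 + ((ε:ℂ) • (∫ s in (0:ℝ)..1, exp ((-s) • X) * Y * exp (s • X))
          + ((ε:ℂ)^2) • (∫ s in (0:ℝ)..1, exp ((-s) • X) * Z * exp (s • X)))
        + ∫ s in (0:ℝ)..1, (exp ((-s) • X) * b * exp (s • X)) *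
            (∫ r in (0:ℝ)..s, exp ((-r) • X) * b * exp (r • (X + b))))
      - exp X *
        (1 + (ε:ℂ) • (∫ s in (0:ℝ)..1, exp ((-s) • X) * Y * exp (s • X))
          + ((ε:ℂ)^2) •
            ((∫ s in (0:ℝ)..1, exp ((-s) • X) * Z * exp (s • X))
              + ∫ s in (0:ℝ)..1, (exp ((-s) • X) * Y * exp (s • X)) *
                  ∫ r in (0:ℝ)..s, exp ((-r) • X) * Y * exp (r • X)))
      = exp X *
        ((∫ s in (0:ℝ)..1, (exp ((-s) • X) * b * exp (s • X)) *
            (∫ r in (0:ℝ)..s, exp ((-r) • X) * b * exp (r • (X + b))))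
          - (ε:ℂ)^2 • ∫ s in (0:ℝ)..1, (exp ((-s) • X) * Y * exp (s • X)) *
              ∫ r in (0:ℝ)..s, exp ((-r) • X) * Y * exp (r • X)) := by
    rw [← mul_sub]
    congr 1
    simp only [smul_add]
    abel
  rw [hfactor]
  have hsub : (∫ s in (0:ℝ)..1, (exp ((-s) • X) * b * exp (s • X)) *
        (∫ r in (0:ℝ)..s, exp ((-r) • X) * b * exp (r • (X + b))))
      - (ε:ℂ)^2 • ∫ s in (0:ℝ)..1, (exp ((-s) • X) * Y * exp (s • X)) *
          ∫ r in (0:ℝ)..s, exp ((-r) • X) * Y * exp (r • X)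
      = ∫ s in (0:ℝ)..1,
          ((exp ((-s) • X) * b * exp (s • X)) *
            (∫ r in (0:ℝ)..s, exp ((-r) • X) * b * exp (r • (X + b)))
          - (ε:ℂ)^2 • ((exp ((-s) • X) * Y * exp (s • X)) *
            (∫ r in (0:ℝ)..s, exp ((-r) • X) * Y * exp (r • X)))) := by
    rw [← intervalIntegral.integral_smul,
      ← intervalIntegral.integral_sub ((hcontc1.fun_mul hK0cont).intervalIntegrable 0 1)
        (((hcontgY.fun_mul hKYcont).fun_const_smul _).intervalIntegrable 0 1)]
  rw [hsub]
  have hnormint : ‖∫ s in (0:ℝ)..1,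
      ((exp ((-s) • X) * b * exp (s • X)) *
          (∫ r in (0:ℝ)..s, exp ((-r) • X) * b * exp (r • (X + b)))
        - (ε:ℂ)^2 • ((exp ((-s) • X) * Y * exp (s • X)) *
          (∫ r in (0:ℝ)..s, exp ((-r) • X) * Y * exp (r • X))))‖
      ≤ 3 * M^6 * Q^3 * ε^3 * |1 - 0| :=
    intervalIntegral.norm_integral_le_of_norm_le_const houter
  have hEXnorm : ‖exp X‖ ≤ M :=
    hMexp X (by linarith [norm_nonneg Y, norm_nonneg Z])
  have hfin := mul_le_mul hEXnorm hnormint (norm_nonneg _)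
    (by linarith : (0:ℝ) ≤ M)
  refine ((norm_mul_le _ _).trans hfin).trans ?_
  rw [show |(1:ℝ) - 0| = 1 by norm_num]
  nlinarith [pow_nonneg hε.le 3]
end

section
/- Let D be a d×d Hermitian matrix with eigenvalues λ₁, …, λ_d (with multiplicity) such that for all k ≠ l, λ_k − λ_l ∉ 2πℤ \ {0}. Then the linear map φ_{iD} : M_d(ℂ) → M_d(ℂ) defined by φ_{iD}(Y) = ∫₀¹ e^{-isD} Y e^{isD} ds is bijective. -/
open scoped Matrix
open NormedSpace intervalIntegral Complex

attribute [local instance] Matrix.linftyOpNormedRing Matrix.linftyOpNormedAlgebra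

/-- If `D` is Hermitian with eigenvalues `λ₁,…,λ_d` such that for `k ≠ l`
`λ_k − λ_l ∉ 2πℤ \ {0}`, then `φ_{iD}(Y) = ∫₀¹ e^{-isD} Y e^{isD} ds` is bijective. -/
theorem phi_iD_bijective {d : ℕ} (D : Matrix (Fin d) (Fin d) ℂ)
    (hD : D.IsHermitian)
    (hgap : ∀ k l : Fin d, k ≠ l → ∀ m : ℤ, m ≠ 0 →
      hD.eigenvalues k - hD.eigenvalues l ≠ 2 * Real.pi * m) :
    Function.Bijective (fun Y : Matrix (Fin d) (Fin d) ℂ =>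
      ∫ s in (0:ℝ)..1,
        NormedSpace.exp ((-(s : ℂ) * Complex.I) • D) * Y * NormedSpace.exp (((s : ℂ) * Complex.I) • D)) := by
  classical
  set U : Matrix (Fin d) (Fin d) ℂ := (hD.eigenvectorUnitary : Matrix (Fin d) (Fin d) ℂ)
    with hUdef
  have hU2 : star U * U = 1 := (Unitary.mem_iff.mp hD.eigenvectorUnitary.2).1
  have hU1 : U * star U = 1 := (Unitary.mem_iff.mp hD.eigenvectorUnitary.2).2
  set lam : Fin d → ℝ := hD.eigenvalues with hlam
  -- exponential of z • D
  have hexp : ∀ z : ℂ, NormedSpace.exp (z • D) =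
      U * Matrix.diagonal (fun k => Complex.exp (z * (lam k : ℂ))) * star U := by
    intro z
    have hUinv : U⁻¹ = star U := Matrix.inv_eq_left_inv hU2
    have hsp : D = U * Matrix.diagonal (RCLike.ofReal ∘ lam) * star U :=
      hD.spectral_theorem
    have hz : z • D = U * (z • Matrix.diagonal (RCLike.ofReal ∘ lam)) * U⁻¹ := by
      rw [hUinv, hsp, Matrix.mul_smul, Matrix.smul_mul]
    rw [hz, Matrix.exp_conj U _ ⟨⟨U, star U, hU1, hU2⟩, rfl⟩, hUinv]
    congr 2
    rw [← Matrix.diagonal_smul, Matrix.exp_diagonal, Pi.exp_def]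
    funext k
    simp [← Complex.exp_eq_exp_ℂ, Function.comp, smul_eq_mul]
  -- the Fourier coefficients
  set c : Fin d → Fin d → ℂ := fun k l =>
    ∫ s in (0:ℝ)..1, Complex.exp (-(s:ℂ) * Complex.I * (lam k : ℂ)) *
      Complex.exp ((s:ℂ) * Complex.I * (lam l : ℂ)) with hcdef
  have hcval : ∀ k l : Fin d, c k l =
      ∫ s in (0:ℝ)..1, Complex.exp ((-Complex.I * ((lam k : ℂ) - (lam l : ℂ))) * s) := by
    intro k l
    rw [hcdef]
    refine intervalIntegral.integral_congr fun s _ => ?_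
    rw [← Complex.exp_add]
    congr 1
    ring
  have hc_ne : ∀ k l : Fin d, c k l ≠ 0 := by
    intro k l
    rcases eq_or_ne (lam k) (lam l) with h | h
    · have h1 : c k l = 1 := by
        rw [hcval k l]
        have : ∀ s ∈ Set.uIcc (0:ℝ) 1,
            Complex.exp ((-Complex.I * ((lam k : ℂ) - (lam l : ℂ))) * s) = 1 := by
          intro s _
          rw [h]
          simp
        rw [intervalIntegral.integral_congr this]
        simp
      rw [h1]; exact one_ne_zero
    · have hkl : k ≠ l := fun e => h (by rw [e])
      have hT : ((lam k : ℂ) - (lam l : ℂ)) ≠ 0 := sub_ne_zero.2 (by exact_mod_cast h)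
      have hcoef : -Complex.I * ((lam k : ℂ) - (lam l : ℂ)) ≠ 0 :=
        mul_ne_zero (neg_ne_zero.2 Complex.I_ne_zero) hT
      have hval : c k l =
          (Complex.exp (-Complex.I * ((lam k : ℂ) - (lam l : ℂ))) - 1) /
            (-Complex.I * ((lam k : ℂ) - (lam l : ℂ))) := by
        rw [hcval k l, integral_exp_mul_complex hcoef]
        norm_num
      intro hzero
      rw [hval, div_eq_zero_iff] at hzero
      rcases hzero with hzero | hzero
      · have hone : Complex.exp (-Complex.I * ((lam k : ℂ) - (lam l : ℂ))) = 1 := by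
          rwa [sub_eq_zero] at hzero
        obtain ⟨n, hn⟩ := Complex.exp_eq_one_iff.mp hone
        have hn0 : n ≠ 0 := by
          rintro rfl
          simp only [Int.cast_zero, zero_mul] at hn
          exact hcoef hn
        have hTeq : ((lam k - lam l : ℝ) : ℂ) = ((2 * Real.pi * ((-n : ℤ) : ℝ) : ℝ) : ℂ) := by
          push_cast
          linear_combination Complex.I * hn +
            ((lam k : ℂ) - (lam l : ℂ) + 2 * (Real.pi : ℂ) * (n : ℂ)) * Complex.I_sq
        exact hgap k l hkl (-n) (neg_ne_zero.2 hn0) (by exact_mod_cast hTeq)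
      · exact hcoef hzero
  -- main reduction of the integral
  have hint : ∀ Y : Matrix (Fin d) (Fin d) ℂ,
      (∫ s in (0:ℝ)..1, NormedSpace.exp ((-(s:ℂ) * Complex.I) • D) * Y *
        NormedSpace.exp (((s:ℂ) * Complex.I) • D))
      = U * Matrix.of (fun k l => c k l * (star U * Y * U) k l) * star U := by
    intro Y
    set Z : Matrix (Fin d) (Fin d) ℂ := star U * Y * U with hZ
    have hptw : ∀ s : ℝ,
        NormedSpace.exp ((-(s:ℂ) * Complex.I) • D) * Y * NormedSpace.exp (((s:ℂ) * Complex.I) • D)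
        = ∑ k, ∑ l, (Complex.exp (-(s:ℂ) * Complex.I * (lam k : ℂ)) *
            Complex.exp ((s:ℂ) * Complex.I * (lam l : ℂ))) •
              (U * Matrix.single k l (Z k l) * star U) := by
      intro s
      rw [hexp (-(s:ℂ) * Complex.I), hexp ((s:ℂ) * Complex.I)]
      have hmid : Matrix.diagonal (fun k => Complex.exp (-(s:ℂ) * Complex.I * (lam k : ℂ))) * Z *
          Matrix.diagonal (fun l => Complex.exp ((s:ℂ) * Complex.I * (lam l : ℂ)))
          = ∑ k, ∑ l, (Complex.exp (-(s:ℂ) * Complex.I * (lam k : ℂ)) *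
              Complex.exp ((s:ℂ) * Complex.I * (lam l : ℂ))) •
                Matrix.single k l (Z k l) := by
        ext i j
        simp [Matrix.diagonal_mul, Matrix.mul_diagonal, Matrix.sum_apply,
          Matrix.single, Matrix.of_apply, ite_and, mul_ite, ite_mul,
          mul_zero, zero_mul, Finset.sum_ite_eq, Finset.sum_ite_eq']
        ring
      calc (U * Matrix.diagonal (fun k => Complex.exp (-(s:ℂ) * Complex.I * (lam k : ℂ))) * star U)
            * Y * (U * Matrix.diagonal (fun l => Complex.exp ((s:ℂ) * Complex.I * (lam l : ℂ))) * star U)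
          = U * (Matrix.diagonal (fun k => Complex.exp (-(s:ℂ) * Complex.I * (lam k : ℂ))) * Z *
              Matrix.diagonal (fun l => Complex.exp ((s:ℂ) * Complex.I * (lam l : ℂ)))) * star U := by
            simp only [hZ, Matrix.mul_assoc]
        _ = _ := by
            rw [hmid, Finset.mul_sum, Finset.sum_mul]
            refine Finset.sum_congr rfl fun k _ => ?_
            rw [Finset.mul_sum, Finset.sum_mul]
            refine Finset.sum_congr rfl fun l _ => ?_
            rw [Matrix.mul_smul, Matrix.smul_mul]
    have hcont : ∀ k l : Fin d, Continuous fun s : ℝ =>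
        Complex.exp (-(s:ℂ) * Complex.I * (lam k : ℂ)) *
          Complex.exp ((s:ℂ) * Complex.I * (lam l : ℂ)) := by
      intro k l
      fun_prop
    simp only [hptw]
    rw [intervalIntegral.integral_finset_sum (f := fun k (s : ℝ) => ∑ l, (Complex.exp (-(s:ℂ) * Complex.I * (lam k : ℂ)) *
          Complex.exp ((s:ℂ) * Complex.I * (lam l : ℂ))) • (U * Matrix.single k l (Z k l) * star U)) (fun k _ =>
      (Continuous.intervalIntegrable (continuous_finset_sum _ fun l _ =>
        ((hcont k l).smul continuous_const)) _ _))]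
    have h1 : ∀ k : Fin d,
        (∫ s in (0:ℝ)..1, ∑ l, (Complex.exp (-(s:ℂ) * Complex.I * (lam k : ℂ)) *
            Complex.exp ((s:ℂ) * Complex.I * (lam l : ℂ))) •
              (U * Matrix.single k l (Z k l) * star U))
          = ∑ l, c k l • (U * Matrix.single k l (Z k l) * star U) := by
      intro k
      rw [intervalIntegral.integral_finset_sum (f := fun l (s : ℝ) => (Complex.exp (-(s:ℂ) * Complex.I * (lam k : ℂ)) *
          Complex.exp ((s:ℂ) * Complex.I * (lam l : ℂ))) • (U * Matrix.single k l (Z k l) * star U)) (fun l _ =>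
        Continuous.intervalIntegrable ((hcont k l).smul continuous_const) _ _)]
      refine Finset.sum_congr rfl fun l _ => ?_
      rw [intervalIntegral.integral_smul_const]
    simp only [h1]
    have h2 : Matrix.of (fun k l => c k l * Z k l)
        = ∑ k, ∑ l, c k l • Matrix.single k l (Z k l) := by
      ext i j
      simp [Matrix.sum_apply, Matrix.single, Matrix.of_apply, ite_and,
        mul_ite, ite_mul, mul_zero, zero_mul, Finset.sum_ite_eq, Finset.sum_ite_eq']
    rw [h2, Finset.mul_sum, Finset.sum_mul]
    refine Finset.sum_congr rfl fun k _ => ?_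
    rw [Finset.mul_sum, Finset.sum_mul]
    refine Finset.sum_congr rfl fun l _ => ?_
    rw [Matrix.mul_smul, Matrix.smul_mul]
  -- conjugation cancellation
  have hconj : ∀ W : Matrix (Fin d) (Fin d) ℂ, star U * (U * W * star U) * U = W := by
    intro W
    calc star U * (U * W * star U) * U = (star U * U) * W * (star U * U) := by
          simp only [Matrix.mul_assoc]
      _ = W := by rw [hU2, one_mul, mul_one]
  have hconj' : ∀ W : Matrix (Fin d) (Fin d) ℂ, U * (star U * W * U) * star U = W := by
    intro W
    calc U * (star U * W * U) * star U = (U * star U) * W * (U * star U) := by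
          simp only [Matrix.mul_assoc]
      _ = W := by rw [hU1, one_mul, mul_one]
  -- conclude
  have hfun : (fun Y : Matrix (Fin d) (Fin d) ℂ =>
      ∫ s in (0:ℝ)..1, NormedSpace.exp ((-(s:ℂ) * Complex.I) • D) * Y *
        NormedSpace.exp (((s:ℂ) * Complex.I) • D))
      = fun Y => U * Matrix.of (fun k l => c k l * (star U * Y * U) k l) * star U :=
    funext hint
  rw [hfun, Function.bijective_iff_has_inverse]
  refine ⟨fun W => U * Matrix.of (fun k l => (c k l)⁻¹ * (star U * W * U) k l) * star U, ?_, ?_⟩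
  · intro Y
    simp only
    rw [hconj]
    have : Matrix.of (fun k l => (c k l)⁻¹ *
        (Matrix.of (fun k l => c k l * (star U * Y * U) k l)) k l) = star U * Y * U := by
      ext i j
      simp only [Matrix.of_apply]
      rw [inv_mul_cancel_left₀ (hc_ne i j)]
    rw [this, hconj']
  · intro W
    simp only
    rw [hconj]
    have : Matrix.of (fun k l => c k l *
        (Matrix.of (fun k l => (c k l)⁻¹ * (star U * W * U) k l)) k l) = star U * W * U := by
      ext i j
      simp only [Matrix.of_apply]
      rw [mul_inv_cancel_left₀ (hc_ne i j)]
    rw [this, hconj']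
end
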